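/- arXiv:2408.03476 — 5 statements merged into one kernel-verified Lean document; each statement's English description precedes it below -/
import Mathlib

section
/- Let Q₁ and Q₂ be probability measures on (Ω, F), both equivalent to P, and suppose K and L are sets of nonnegative random variables with sup_{ξ∈K} E_{Q₁}[ξ] < ∞ and sup_{ξ∈L} E_{Q₂}[ξ] < ∞. Define the probability measure Q by dQ/dP = (1/C)·min(dQ₁/dP, dQ₂/dP), where C = E_P[min(dQ₁/dP, dQ₂/dP)]. Then 0 < C < ∞, Q is a probability measure equivalent to P, and sup_{ξ∈K∪L} E_Q[ξ] < ∞. -/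
open MeasureTheory
open scoped ENNReal

theorem stmt_4 {Ω : Type*} [MeasurableSpace Ω] (P Q₁ Q₂ : Measure Ω)
    [IsProbabilityMeasure P] [IsProbabilityMeasure Q₁] [IsProbabilityMeasure Q₂]
    (h1 : Q₁ ≪ P) (h1' : P ≪ Q₁) (h2 : Q₂ ≪ P) (h2' : P ≪ Q₂)
    (K L : Set (Ω → ℝ))
    (hKnn : ∀ f ∈ K, ∀ᵐ ω ∂P, 0 ≤ f ω) (hLnn : ∀ f ∈ L, ∀ᵐ ω ∂P, 0 ≤ f ω)
    (BK : ℝ≥0∞) (hBK : BK < ⊤) (hK : ∀ f ∈ K, ∫⁻ ω, ENNReal.ofReal (f ω) ∂Q₁ ≤ BK)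
    (BL : ℝ≥0∞) (hBL : BL < ⊤) (hL : ∀ f ∈ L, ∫⁻ ω, ENNReal.ofReal (f ω) ∂Q₂ ≤ BL)
    (C : ℝ≥0∞) (hC : C = ∫⁻ ω, min (Q₁.rnDeriv P ω) (Q₂.rnDeriv P ω) ∂P)
    (Q : Measure Ω)
    (hQ : Q = C⁻¹ • P.withDensity (fun ω => min (Q₁.rnDeriv P ω) (Q₂.rnDeriv P ω))) :
    0 < C ∧ C < ⊤ ∧ IsProbabilityMeasure Q ∧ Q ≪ P ∧ P ≪ Q ∧
      ∃ B : ℝ≥0∞, B < ⊤ ∧ ∀ f ∈ K ∪ L, ∫⁻ ω, ENNReal.ofReal (f ω) ∂Q ≤ B := by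
  set g : Ω → ℝ≥0∞ := fun ω => min (Q₁.rnDeriv P ω) (Q₂.rnDeriv P ω) with hg
  have hg_meas : Measurable g := (Q₁.measurable_rnDeriv P).min (Q₂.measurable_rnDeriv P)
  have hg_lt_top : ∀ᵐ ω ∂P, g ω < ⊤ := by
    filter_upwards [Q₁.rnDeriv_lt_top P] with ω h using lt_of_le_of_lt (min_le_left _ _) h
  have hg_pos : ∀ᵐ ω ∂P, 0 < g ω := by
    filter_upwards [Measure.rnDeriv_pos' h1', Measure.rnDeriv_pos' h2'] with ω h₁ h₂
    exact lt_min h₁ h₂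
  have hCpos : 0 < C := by
    rw [hC]
    rw [lintegral_pos_iff_support hg_meas]
    have : ∀ᵐ ω ∂P, ω ∈ Function.support g := by
      filter_upwards [hg_pos] with ω h using h.ne'
    by_contra hcon
    push_neg at hcon
    have h0 : P (Function.support g) = 0 := le_antisymm hcon zero_le
    have := ae_iff.mp this
    have huniv : P Set.univ ≤ P {a | a ∉ Function.support g} + P (Function.support g) := by
      refine le_trans (measure_mono ?_) (measure_union_le _ _)
      intro x _
      by_cases hx : x ∈ Function.support g
      · exact Or.inr hx
      · exact Or.inl hx
    rw [this, h0, add_zero, measure_univ] at huniv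
    simp at huniv
  have hCle : C ≤ 1 := by
    rw [hC]
    calc ∫⁻ ω, g ω ∂P ≤ ∫⁻ ω, Q₁.rnDeriv P ω ∂P :=
          lintegral_mono fun ω => min_le_left _ _
      _ = Q₁ Set.univ := Measure.lintegral_rnDeriv h1
      _ = 1 := measure_univ
  have hClt : C < ⊤ := lt_of_le_of_lt hCle (by simp)
  have hCne : C ≠ 0 := hCpos.ne'
  have hCnetop : C ≠ ⊤ := hClt.ne
  -- lintegral under Q
  have hQint : ∀ h : Ω → ℝ≥0∞, ∫⁻ ω, h ω ∂Q = C⁻¹ * ∫⁻ ω, g ω * h ω ∂P := by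
    intro h
    rw [hQ, lintegral_smul_measure,
      lintegral_withDensity_eq_lintegral_mul_non_measurable _ hg_meas hg_lt_top]
    rfl
  have hQprob : IsProbabilityMeasure Q := by
    constructor
    have := hQint (fun _ => 1)
    simp only [lintegral_one] at this
    rw [this]
    have : ∫⁻ ω, g ω * 1 ∂P = C := by simp [hC]
    rw [this, ENNReal.inv_mul_cancel hCne hCnetop]
  have hQP : Q ≪ P := by
    rw [hQ]
    refine Measure.AbsolutelyContinuous.mk fun s hs h0 => ?_
    have : (P.withDensity g) s = 0 := (withDensity_absolutelyContinuous P g) h0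
    simp [this]
  have hPQ : P ≪ Q := by
    rw [hQ]
    have h1 : P ≪ P.withDensity g :=
      withDensity_absolutelyContinuous' hg_meas.aemeasurable
        (by filter_upwards [hg_pos] with ω h using h.ne')
    refine h1.trans (Measure.AbsolutelyContinuous.mk fun s hs h0 => ?_)
    rw [Measure.smul_apply, smul_eq_mul] at h0
    exact (mul_eq_zero.mp h0).resolve_left (by simp [hCne, hCnetop])
  refine ⟨hCpos, hClt, hQprob, hQP, hPQ, C⁻¹ * max BK BL, ?_, ?_⟩
  · refine ENNReal.mul_lt_top ?_ (by simp [hBK.ne, hBL.ne, max_lt hBK hBL])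
    simp [ENNReal.inv_lt_top, hCpos]
  · intro f hf
    rw [hQint]
    cases hf with
    | inl hf =>
        refine mul_le_mul_right ?_ _ |>.trans
          (mul_le_mul_right (le_max_left _ _ |>.trans' (hK f hf)) _)
        calc ∫⁻ ω, g ω * ENNReal.ofReal (f ω) ∂P
            ≤ ∫⁻ ω, Q₁.rnDeriv P ω * ENNReal.ofReal (f ω) ∂P :=
              lintegral_mono fun ω => mul_le_mul_left (min_le_left _ _) _
          _ = ∫⁻ ω, ENNReal.ofReal (f ω) ∂(P.withDensity (Q₁.rnDeriv P)) :=
              (lintegral_withDensity_eq_lintegral_mul_non_measurable _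
                (Q₁.measurable_rnDeriv P) (Q₁.rnDeriv_lt_top P) _).symm
          _ = ∫⁻ ω, ENNReal.ofReal (f ω) ∂Q₁ := by
              rw [Measure.withDensity_rnDeriv_eq _ _ h1]
    | inr hf =>
        refine mul_le_mul_right ?_ _ |>.trans
          (mul_le_mul_right (le_max_right _ _ |>.trans' (hL f hf)) _)
        calc ∫⁻ ω, g ω * ENNReal.ofReal (f ω) ∂P
            ≤ ∫⁻ ω, Q₂.rnDeriv P ω * ENNReal.ofReal (f ω) ∂P :=
              lintegral_mono fun ω => mul_le_mul_left (min_le_right _ _) _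
          _ = ∫⁻ ω, ENNReal.ofReal (f ω) ∂(P.withDensity (Q₂.rnDeriv P)) :=
              (lintegral_withDensity_eq_lintegral_mul_non_measurable _
                (Q₂.measurable_rnDeriv P) (Q₂.rnDeriv_lt_top P) _).symm
          _ = ∫⁻ ω, ENNReal.ofReal (f ω) ∂Q₂ := by
              rw [Measure.withDensity_rnDeriv_eq _ _ h2]
end

section
/- Let (E, Σ, μ) be a finite measure space and {ξₙ} ⊆ L¹(μ) with supₙ ∫|ξₙ| dμ < ∞. Then there exist a subsequence {n_k} and an increasing sequence {A_k} ⊆ Σ such that {1_{A_m} ξ_{n_k}}_k is uniformly μ-integrable for every m, and ⋃_k A_k = E \ N for some N ∈ Σ with μ(N) = 0. -/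
open MeasureTheory Filter ENNReal Topology

theorem stmt_7 {E : Type*} [MeasurableSpace E] (μ : Measure E) [IsFiniteMeasure μ]
    (ξ : ℕ → E → ℝ) (hint : ∀ n, Integrable (ξ n) μ)
    (B : ℝ) (hB : ∀ n, ∫ x, |ξ n x| ∂μ ≤ B) :
    ∃ (nk : ℕ → ℕ), StrictMono nk ∧
      ∃ A : ℕ → Set E, (∀ k, MeasurableSet (A k)) ∧ Monotone A ∧
        (∀ m, UnifIntegrable (fun k => (A m).indicator (ξ (nk k))) 1 μ) ∧
        ∃ N : Set E, MeasurableSet N ∧ μ N = 0 ∧ (⋃ k, A k) = Nᶜ := by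
  classical
  have hgm : ∀ n, StronglyMeasurable ((hint n).1.mk (ξ n)) :=
    fun n => (hint n).1.stronglyMeasurable_mk
  have hgae : ∀ n, ξ n =ᵐ[μ] (hint n).1.mk (ξ n) := fun n => (hint n).1.ae_eq_mk
  set F : ℕ → E → ℝ≥0∞ := fun n x => (‖(hint n).1.mk (ξ n) x‖₊ : ℝ≥0∞) with hF
  have hFm : ∀ n, Measurable (F n) := fun n => (hgm n).measurable.nnnorm.coe_nnreal_ennreal
  set Bb : ℝ≥0∞ := ENNReal.ofReal B with hBb
  have hBbne : Bb ≠ ⊤ := ENNReal.ofReal_ne_top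
  have hFae : ∀ n, (fun x => (‖ξ n x‖₊ : ℝ≥0∞)) =ᵐ[μ] F n :=
    fun n => (hgae n).mono fun x hx => by simp [hF, hx]
  have hFB : ∀ n, ∫⁻ x, F n x ∂μ ≤ Bb := by
    intro n
    rw [← lintegral_congr_ae (hFae n)]
    simp only [← enorm_eq_nnnorm]
    rw [← ofReal_integral_norm_eq_lintegral_enorm (hint n)]
    exact ENNReal.ofReal_le_ofReal (by simpa [Real.norm_eq_abs] using hB n)
  -- eLpNorm of indicator in terms of F
  have hsl : ∀ (n : ℕ) (s : Set E), MeasurableSet s →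
      eLpNorm (s.indicator (ξ n)) 1 μ = ∫⁻ x in s, F n x ∂μ := by
    intro n s hs
    rw [eLpNorm_indicator_eq_eLpNorm_restrict hs, eLpNorm_one_eq_lintegral_enorm]
    exact lintegral_congr_ae (ae_restrict_of_ae (hFae n))
  -- uniform absolute continuity for finitely many functions, lintegral form
  have habs : ∀ (J : ℕ) {ε : ℝ}, 0 < ε → ∃ d : ℝ, 0 < d ∧ ∀ i, i ≤ J → ∀ s : Set E,
      MeasurableSet s → μ s ≤ ENNReal.ofReal d → ∫⁻ x in s, F i x ∂μ ≤ ENNReal.ofReal ε := by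
    intro J ε hε
    obtain ⟨d, hd, hdspec⟩ := unifIntegrable_fin (μ := μ) le_rfl ENNReal.one_ne_top
      (f := fun i : Fin (J + 1) => ξ i) (fun i => memLp_one_iff_integrable.2 (hint i)) hε
    refine ⟨d, hd, fun i hiJ s hs hμs => ?_⟩
    rw [← hsl i s hs]
    exact hdspec ⟨i, Nat.lt_succ_of_le hiJ⟩ s hs hμs
  -- the tail quantities
  set q : ℝ≥0∞ → ℕ → ℝ≥0∞ := fun t n => ∫⁻ x in {x | t ≤ F n x}, F n x ∂μ with hq
  set p : ℕ → ℝ≥0∞ := fun K => limsup (q (2 ^ K)) atTop with hp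
  set δ : ℝ≥0∞ := ⨅ K, p K with hδdef
  have hqB : ∀ t n, q t n ≤ Bb := fun t n => (setLIntegral_le_lintegral _ _).trans (hFB n)
  have hpB : ∀ K, p K ≤ Bb := fun K =>
    limsup_le_of_le (by isBoundedDefault) (Eventually.of_forall fun n => hqB _ n)
  have hδB : δ ≤ Bb := (iInf_le _ 0).trans (hpB 0)
  have hδne : δ ≠ ⊤ := (hδB.trans_lt hBbne.lt_top).ne
  have hpne : ∀ K, p K ≠ ⊤ := fun K => ((hpB K).trans_lt hBbne.lt_top).ne
  set η : ℕ → ℝ≥0∞ := fun k => ENNReal.ofReal (1 / (k + 1)) with hη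
  have hηpos : ∀ k, η k ≠ 0 := fun k => (ENNReal.ofReal_pos.2 (by positivity)).ne'
  have hηtop : ∀ k, η k ≠ ⊤ := fun k => ENNReal.ofReal_ne_top
  -- frequently, q is ≥ δ - η
  have hfreq : ∀ k N : ℕ, ∃ n, N ≤ n ∧ δ ≤ q (2 ^ k) n + η k := by
    intro k N
    by_contra hcon
    push_neg at hcon
    have hδ0 : δ ≠ 0 := by
      intro h0
      have hlt := hcon N le_rfl
      rw [h0] at hlt
      exact lt_irrefl 0 (lt_of_le_of_lt zero_le hlt)
    have hev : ∀ᶠ n in atTop, q (2 ^ k) n ≤ δ - η k :=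
      eventually_atTop.2 ⟨N, fun n hn => (ENNReal.cancel_of_ne (hηtop k)).le_tsub_of_add_le_right (hcon n hn).le⟩
    have h1 : p k ≤ δ - η k := limsup_le_of_le (by isBoundedDefault) hev
    have h2 : δ - η k < δ := ENNReal.sub_lt_self hδne hδ0 (hηpos k)
    exact (((iInf_le p k).trans h1).trans_lt h2).false
  -- the subsequence
  choose f hf1 hf2 using hfreq
  set nn : ℕ → ℕ := fun k => Nat.rec (f 0 0) (fun k ih => f (k + 1) (ih + 1)) k with hnn
  have hnnmono : StrictMono nn := strictMono_nat_of_lt_succ (fun k => by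
    have h := hf1 (k + 1) (nn k + 1)
    have : nn (k + 1) = f (k + 1) (nn k + 1) := rfl
    omega)
  have hnnspec : ∀ k, δ ≤ q (2 ^ k) (nn k) + η k := by
    intro k
    cases k with
    | zero => exact hf2 0 0
    | succ k => exact hf2 (k + 1) (nn k + 1)
  -- Markov inequality
  have hmark : ∀ (k n : ℕ), μ {x | (2 : ℝ≥0∞) ^ k ≤ F n x} ≤ Bb / 2 ^ k := by
    intro k n
    refine (meas_ge_le_lintegral_div (hFm n).aemeasurable (pow_ne_zero _ two_ne_zero)
      (ENNReal.pow_ne_top (by norm_num))).trans ?_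
    exact ENNReal.div_le_div_right (hFB n) _
  -- the bad sets
  set D : ℕ → Set E := fun k => {x | (2 : ℝ≥0∞) ^ k ≤ F (nn k) x} with hD
  have hDm : ∀ k, MeasurableSet (D k) := fun k => measurableSet_le measurable_const (hFm _)
  set A : ℕ → Set E := fun m => ⋂ k, ⋂ (_ : m ≤ k), (D k)ᶜ with hA
  have hAmeas : ∀ m, MeasurableSet (A m) :=
    fun m => MeasurableSet.iInter fun k => MeasurableSet.iInter fun _ => (hDm k).compl
  have hAmono : Monotone A := by
    intro m m' h x hx
    simp only [hA, Set.mem_iInter] at hx ⊢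
    exact fun k hk => hx k (h.trans hk)
  have hAsub : ∀ m k, m ≤ k → A m ⊆ {x | F (nn k) x < 2 ^ k} := by
    intro m k hmk x hx
    simp only [hA, Set.mem_iInter, Set.mem_compl_iff, hD, Set.mem_setOf_eq] at hx
    exact lt_of_not_ge (hx k hmk)
  -- Borel-Cantelli
  have hsum : ∑' k, μ (D k) ≠ ⊤ := by
    have hgeo : ∑' k : ℕ, Bb / 2 ^ k ≠ ⊤ := by
      have : ∑' k : ℕ, Bb / 2 ^ k = Bb * 2 := by
        have hdm : ∀ k : ℕ, Bb / 2 ^ k = Bb * 2⁻¹ ^ k := fun k => by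
          rw [div_eq_mul_inv, ENNReal.inv_pow]
        simp_rw [hdm]
        rw [ENNReal.tsum_mul_left, ENNReal.tsum_geometric, ENNReal.one_sub_inv_two, inv_inv]
      rw [this]
      exact ENNReal.mul_ne_top hBbne (by norm_num)
    exact ne_top_of_le_ne_top hgeo (ENNReal.tsum_le_tsum fun k => hmark k (nn k))
  have hNlim : (⋃ m, A m)ᶜ = limsup D atTop := by
    rw [limsup_eq_iInf_iSup_of_nat]
    simp only [hA, Set.compl_iUnion, Set.compl_iInter, compl_compl]
    rfl
  have hNzero : μ ((⋃ m, A m)ᶜ) = 0 := by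
    rw [hNlim]
    exact measure_limsup_atTop_eq_zero hsum
  -- KEY: uniform absolute continuity of the truncated sequence
  have hKEY : ∀ ε : ℝ, 0 < ε → ∃ d : ℝ, 0 < d ∧ ∀ (k : ℕ) (s : Set E), MeasurableSet s →
      μ s ≤ ENNReal.ofReal d →
      ∫⁻ x in s ∩ {x | F (nn k) x < 2 ^ k}, F (nn k) x ∂μ ≤ ENNReal.ofReal ε := by
    by_contra hcon
    push_neg at hcon
    obtain ⟨ε₀, hε₀, hcon⟩ := hcon
    set ε' : ℝ≥0∞ := ENNReal.ofReal ε₀ with hε'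
    have hε'pos : ε' ≠ 0 := (ENNReal.ofReal_pos.2 hε₀).ne'
    have hchoice : ∀ j : ℕ, ∃ (k : ℕ) (s : Set E), MeasurableSet s ∧
        μ s ≤ ENNReal.ofReal (1 / (j + 1)) ∧
        ε' < (∫⁻ x in s ∩ {x | F (nn k) x < 2 ^ k}, F (nn k) x ∂μ) ∧ j < k := by
      intro j
      obtain ⟨d, hd, hdspec⟩ := habs (nn j) hε₀
      obtain ⟨k, s, hs, hμs, hbig⟩ := hcon (min d (1 / (j + 1))) (lt_min hd (by positivity))
      refine ⟨k, s, hs, hμs.trans (ENNReal.ofReal_le_ofReal (min_le_right _ _)), hbig, ?_⟩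
      by_contra hk
      push_neg at hk
      have h1 : (∫⁻ x in s ∩ {x | F (nn k) x < 2 ^ k}, F (nn k) x ∂μ)
          ≤ ∫⁻ x in s, F (nn k) x ∂μ := lintegral_mono_set Set.inter_subset_left
      have h2 : (∫⁻ x in s, F (nn k) x ∂μ) ≤ ε' :=
        hdspec (nn k) (hnnmono.monotone hk) s hs
          (hμs.trans (ENNReal.ofReal_le_ofReal (min_le_left _ _)))
      exact (hbig.trans_le (h1.trans h2)).false
    choose k s hsm hsμ hsbig hjk using hchoice
    -- lower bound
    have hlow : ∀ j, δ + ε' ≤ (∫⁻ x in s j ∪ D (k j), F (nn (k j)) x ∂μ) + η (k j) := by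
      intro j
      have hq1 : δ ≤ q (2 ^ k j) (nn (k j)) + η (k j) := hnnspec (k j)
      have hdisj : Disjoint (s j ∩ {x | F (nn (k j)) x < 2 ^ k j}) (D (k j)) := by
        rw [Set.disjoint_left]
        rintro x ⟨-, hx2⟩ hxD
        simp only [hD, Set.mem_setOf_eq] at hxD
        exact absurd hxD (not_le.2 hx2)
      have hunion : q (2 ^ k j) (nn (k j)) + ε'
          ≤ ∫⁻ x in s j ∪ D (k j), F (nn (k j)) x ∂μ := by
        have he : (∫⁻ x in (s j ∩ {x | F (nn (k j)) x < 2 ^ k j}) ∪ D (k j),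
              F (nn (k j)) x ∂μ)
            = (∫⁻ x in s j ∩ {x | F (nn (k j)) x < 2 ^ k j}, F (nn (k j)) x ∂μ)
              + q (2 ^ k j) (nn (k j)) := lintegral_union (hDm (k j)) hdisj
        calc q (2 ^ k j) (nn (k j)) + ε'
            ≤ q (2 ^ k j) (nn (k j))
              + ∫⁻ x in s j ∩ {x | F (nn (k j)) x < 2 ^ k j}, F (nn (k j)) x ∂μ :=
              add_le_add_right (hsbig j).le _
          _ = ∫⁻ x in (s j ∩ {x | F (nn (k j)) x < 2 ^ k j}) ∪ D (k j),
              F (nn (k j)) x ∂μ := by rw [he, add_comm]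
          _ ≤ _ := lintegral_mono_set
              (Set.union_subset_union_left _ Set.inter_subset_left)
      calc δ + ε' ≤ (q (2 ^ k j) (nn (k j)) + η (k j)) + ε' := add_le_add_left hq1 _
        _ = (q (2 ^ k j) (nn (k j)) + ε') + η (k j) := by ring
        _ ≤ _ := add_le_add_left hunion _
    -- upper bound
    have hup : ∀ (K j : ℕ), (∫⁻ x in s j ∪ D (k j), F (nn (k j)) x ∂μ)
        ≤ q (2 ^ K) (nn (k j)) + 2 ^ K * μ (s j ∪ D (k j)) := by
      intro K j
      have hTm : MeasurableSet (s j ∪ D (k j)) := (hsm j).union (hDm _)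
      have hsplit : s j ∪ D (k j)
          = ((s j ∪ D (k j)) ∩ {x | (2 : ℝ≥0∞) ^ K ≤ F (nn (k j)) x})
            ∪ ((s j ∪ D (k j)) ∩ {x | F (nn (k j)) x < 2 ^ K}) := by
        rw [← Set.inter_union_distrib_left]
        have : {x | (2 : ℝ≥0∞) ^ K ≤ F (nn (k j)) x}
            ∪ {x | F (nn (k j)) x < 2 ^ K} = Set.univ := by
          ext x; simp [le_or_gt]
        rw [this, Set.inter_univ]
      have hle1 : (∫⁻ x in (s j ∪ D (k j)) ∩ {x | (2 : ℝ≥0∞) ^ K ≤ F (nn (k j)) x},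
          F (nn (k j)) x ∂μ) ≤ q (2 ^ K) (nn (k j)) :=
        lintegral_mono_set Set.inter_subset_right
      have hle2 : (∫⁻ x in (s j ∪ D (k j)) ∩ {x | F (nn (k j)) x < 2 ^ K},
          F (nn (k j)) x ∂μ) ≤ 2 ^ K * μ (s j ∪ D (k j)) := by
        calc (∫⁻ x in (s j ∪ D (k j)) ∩ {x | F (nn (k j)) x < 2 ^ K}, F (nn (k j)) x ∂μ)
            ≤ ∫⁻ _ in (s j ∪ D (k j)) ∩ {x | F (nn (k j)) x < 2 ^ K}, (2 : ℝ≥0∞) ^ K ∂μ :=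
              setLIntegral_mono' (hTm.inter (measurableSet_lt (hFm _) measurable_const))
                (fun x hx => hx.2.le)
          _ = 2 ^ K * μ ((s j ∪ D (k j)) ∩ {x | F (nn (k j)) x < 2 ^ K}) :=
              setLIntegral_const _ _
          _ ≤ 2 ^ K * μ (s j ∪ D (k j)) :=
              mul_le_mul_right (measure_mono Set.inter_subset_left) _
      calc (∫⁻ x in s j ∪ D (k j), F (nn (k j)) x ∂μ)
          ≤ (∫⁻ x in (s j ∪ D (k j)) ∩ {x | (2 : ℝ≥0∞) ^ K ≤ F (nn (k j)) x},
              F (nn (k j)) x ∂μ)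
            + ∫⁻ x in (s j ∪ D (k j)) ∩ {x | F (nn (k j)) x < 2 ^ K},
              F (nn (k j)) x ∂μ := by
            nth_rewrite 1 [hsplit]
            exact lintegral_union_le _ _ _
        _ ≤ _ := add_le_add hle1 hle2
    -- error terms tend to zero
    have ht1 : Tendsto (fun j : ℕ => ENNReal.ofReal (1 / (j + 1))) atTop (𝓝 0) := by
      rw [← ENNReal.ofReal_zero]
      exact (ENNReal.continuous_ofReal.tendsto 0).comp tendsto_one_div_add_atTop_nhds_zero_nat
    have ht2 : Tendsto (fun j : ℕ => Bb * 2⁻¹ ^ (j + 1)) atTop (𝓝 0) := by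
      have hp2 := ENNReal.tendsto_pow_atTop_nhds_zero_of_lt_one
        (by norm_num : (2 : ℝ≥0∞)⁻¹ < 1)
      have := ENNReal.Tendsto.const_mul (hp2.comp (tendsto_add_atTop_nat 1)) (Or.inr hBbne)
      simpa [Function.comp] using this
    have hμT : ∀ j, μ (s j ∪ D (k j))
        ≤ ENNReal.ofReal (1 / (j + 1)) + Bb * 2⁻¹ ^ (j + 1) := by
      intro j
      refine (measure_union_le _ _).trans (add_le_add (hsμ j) ?_)
      refine (hmark (k j) (nn (k j))).trans ?_
      rw [div_eq_mul_inv, ENNReal.inv_pow]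
      exact mul_le_mul_right
        (pow_le_pow_of_le_one zero_le (by norm_num) (Nat.succ_le_of_lt (hjk j))) _
    have hη2 : ∀ j, η (k j) ≤ ENNReal.ofReal (1 / (j + 1)) := by
      intro j
      refine ENNReal.ofReal_le_ofReal ?_
      have h1 : (0:ℝ) < (j : ℝ) + 1 := by positivity
      have h2 : ((j : ℝ) + 1) ≤ (k j : ℝ) + 1 := by
        have := (hjk j).le
        exact_mod_cast Nat.succ_le_succ this
      exact one_div_le_one_div_of_le h1 h2
    -- conclusion: δ + ε' ≤ p K for all K
    have hfinal : ∀ K : ℕ, δ + ε' ≤ p K := by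
      intro K
      refine ENNReal.le_of_forall_pos_le_add fun θ hθ hKtop => ?_
      have hθ'0 : (0 : ℝ≥0∞) < (θ : ℝ≥0∞) / 2 :=
        ENNReal.div_pos (by exact_mod_cast hθ.ne') (by norm_num)
      have hev1 : ∀ᶠ n in atTop, q (2 ^ K) n < p K + (θ : ℝ≥0∞) / 2 :=
        eventually_lt_of_limsup_lt (ENNReal.lt_add_right (hpne K) hθ'0.ne')
      obtain ⟨M, hM⟩ := eventually_atTop.1 hev1
      have hγ : Tendsto (fun j : ℕ => (2 : ℝ≥0∞) ^ K
          * (ENNReal.ofReal (1 / (j + 1)) + Bb * 2⁻¹ ^ (j + 1))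
          + ENNReal.ofReal (1 / (j + 1))) atTop (𝓝 0) := by
        have h12 : Tendsto (fun j : ℕ => ENNReal.ofReal (1 / (j + 1)) + Bb * 2⁻¹ ^ (j + 1))
            atTop (𝓝 0) := by simpa using ht1.add ht2
        have hcm := (ENNReal.Tendsto.const_mul (a := (2 : ℝ≥0∞) ^ K) h12
          (Or.inr (ENNReal.pow_ne_top (by norm_num : (2:ℝ≥0∞) ≠ ⊤)))).add ht1
        simpa using hcm
      have hev2 : ∀ᶠ j in atTop,
          (2 : ℝ≥0∞) ^ K * μ (s j ∪ D (k j)) + η (k j) < (θ : ℝ≥0∞) / 2 := by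
        refine (hγ.eventually_lt_const hθ'0).mono fun j hj => lt_of_le_of_lt ?_ hj
        exact add_le_add (mul_le_mul_right (hμT j) _) (hη2 j)
      have hev3 : ∀ᶠ j in atTop, M ≤ nn (k j) :=
        eventually_atTop.2 ⟨M, fun j hj =>
          le_trans (hj.trans (hjk j).le) hnnmono.le_apply⟩
      obtain ⟨j, hj2, hj3⟩ := (hev2.and hev3).exists
      calc δ + ε' ≤ (∫⁻ x in s j ∪ D (k j), F (nn (k j)) x ∂μ) + η (k j) := hlow j
        _ ≤ (q (2 ^ K) (nn (k j)) + 2 ^ K * μ (s j ∪ D (k j))) + η (k j) :=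
            add_le_add_left (hup K j) _
        _ = q (2 ^ K) (nn (k j)) + (2 ^ K * μ (s j ∪ D (k j)) + η (k j)) := by
            rw [add_assoc]
        _ ≤ (p K + (θ : ℝ≥0∞) / 2) + (θ : ℝ≥0∞) / 2 :=
            add_le_add (hM _ hj3).le hj2.le
        _ = p K + θ := by rw [add_assoc, ENNReal.add_halves]
    have hcontr : δ + ε' ≤ δ := by
      rw [hδdef]
      exact le_iInf hfinal
    have hz : ε' ≤ 0 := by
      have h0 : δ + ε' ≤ δ + 0 := by simpa using hcontr
      exact (ENNReal.add_le_add_iff_left hδne).1 h0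
    exact hε'pos (le_antisymm hz zero_le)
  refine ⟨nn, hnnmono, A, hAmeas, hAmono, ?_, (⋃ m, A m)ᶜ,
    (MeasurableSet.iUnion fun m => hAmeas m).compl, hNzero, (compl_compl _).symm⟩
  intro m ε hε
  obtain ⟨d₁, hd₁, hK1⟩ := hKEY ε hε
  obtain ⟨d₂, hd₂, hK2⟩ := unifIntegrable_fin (μ := μ) le_rfl ENNReal.one_ne_top
    (f := fun i : Fin m => ξ (nn i)) (fun i => memLp_one_iff_integrable.2 (hint _)) hε
  refine ⟨min d₁ d₂, lt_min hd₁ hd₂, fun i t ht hμt => ?_⟩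
  rw [Set.indicator_indicator]
  by_cases him : i < m
  · have hcomm : (t ∩ A m).indicator (ξ (nn i)) = (A m).indicator (t.indicator (ξ (nn i))) := by
      rw [Set.indicator_indicator, Set.inter_comm]
    rw [hcomm]
    exact (eLpNorm_indicator_le _).trans
      (hK2 ⟨i, him⟩ t ht (hμt.trans (ENNReal.ofReal_le_ofReal (min_le_right _ _))))
  · push_neg at him
    rw [hsl (nn i) (t ∩ A m) (ht.inter (hAmeas m))]
    calc (∫⁻ x in t ∩ A m, F (nn i) x ∂μ)
        ≤ ∫⁻ x in t ∩ {x | F (nn i) x < 2 ^ i}, F (nn i) x ∂μ :=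
          lintegral_mono_set (Set.inter_subset_inter_right _ (hAsub m i him))
      _ ≤ ENNReal.ofReal ε :=
          hK1 i t ht (hμt.trans (ENNReal.ofReal_le_ofReal (min_le_left _ _)))
end

section
/- Let {ε_{n,k} : n ∈ ℕ, 1 ≤ k ≤ 2^{n−1}} be independent random variables with P(ε_{n,k} = 2ⁿ(1 − 4⁻ⁿ)) = 4⁻ⁿ and P(ε_{n,k} = −2⁻ⁿ) = 1 − 4⁻ⁿ. Then, almost surely, for all but finitely many n, ε_{n,k} = −2⁻ⁿ for every k ∈ {1, …, 2^{n−1}}; consequently ∑_{k=1}^{2^{n−1}} ε_{n,k}² → 0 almost surely as n → ∞. -/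
open MeasureTheory Filter ProbabilityTheory

theorem stmt_11 {Ω : Type*} [MeasurableSpace Ω] (P : Measure Ω) [IsProbabilityMeasure P]
    (ε : ℕ × ℕ → Ω → ℝ) (hmeas : ∀ p, Measurable (ε p))
    (hindep : iIndepFun ε P)
    (hdist : ∀ n, 1 ≤ n → ∀ k ∈ Finset.Icc 1 (2 ^ (n - 1)),
      P {ω | ε (n, k) ω = 2 ^ n * (1 - ((4 : ℝ) ^ n)⁻¹)} = ENNReal.ofReal ((4 : ℝ) ^ n)⁻¹ ∧
      P {ω | ε (n, k) ω = -((2 : ℝ) ^ n)⁻¹} = ENNReal.ofReal (1 - ((4 : ℝ) ^ n)⁻¹)) :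
    ∀ᵐ ω ∂P,
      (∀ᶠ n in atTop, ∀ k ∈ Finset.Icc 1 (2 ^ (n - 1)), ε (n, k) ω = -((2 : ℝ) ^ n)⁻¹) ∧
      Tendsto (fun n => ∑ k ∈ Finset.Icc 1 (2 ^ (n - 1)), (ε (n, k) ω) ^ 2) atTop (nhds 0) := by
  -- the "bad" events
  set E : ℕ → Set Ω := fun n =>
    ⋃ k ∈ Finset.Icc 1 (2 ^ (n - 1)), {ω | ε (n, k) ω ≠ -((2 : ℝ) ^ n)⁻¹} with hE
  -- the bounding sequence
  set g : ℕ → ℝ := fun n => (2 : ℝ) ^ (n - 1) * ((4 : ℝ) ^ n)⁻¹ with hg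
  have hg_nonneg : ∀ n, 0 ≤ g n := fun n => by positivity
  have hg_le : ∀ n, g n ≤ (2 : ℝ)⁻¹ ^ n := by
    intro n
    have h1 : (2 : ℝ) ^ (n - 1) ≤ 2 ^ n := pow_le_pow_right₀ (by norm_num) (Nat.sub_le n 1)
    have h2 : (4 : ℝ) ^ n = 2 ^ n * 2 ^ n := by rw [← mul_pow]; norm_num
    have h3 : (2 : ℝ) ^ n * ((4 : ℝ) ^ n)⁻¹ = (2 : ℝ)⁻¹ ^ n := by
      rw [h2]; field_simp
      rw [← mul_pow]; norm_num
    calc g n ≤ (2 : ℝ) ^ n * ((4 : ℝ) ^ n)⁻¹ := by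
          exact mul_le_mul_of_nonneg_right h1 (by positivity)
      _ = (2 : ℝ)⁻¹ ^ n := h3
  have hg_summable : Summable g :=
    Summable.of_nonneg_of_le hg_nonneg hg_le
      (summable_geometric_of_lt_one (by norm_num) (by norm_num))
  have hg_tendsto : Tendsto g atTop (nhds 0) :=
    squeeze_zero hg_nonneg hg_le (tendsto_pow_atTop_nhds_zero_of_lt_one (by norm_num) (by norm_num))
  -- probability of a single bad variable
  have hsingle : ∀ n, 1 ≤ n → ∀ k ∈ Finset.Icc 1 (2 ^ (n - 1)),
      P {ω | ε (n, k) ω ≠ -((2 : ℝ) ^ n)⁻¹} = ENNReal.ofReal ((4 : ℝ) ^ n)⁻¹ := by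
    intro n hn k hk
    have h4le : ((4 : ℝ) ^ n)⁻¹ ≤ 1 := by
      rw [inv_le_one_iff₀]; right; exact one_le_pow₀ (by norm_num)
    have hmeasset : MeasurableSet {ω | ε (n, k) ω = -((2 : ℝ) ^ n)⁻¹} :=
      (hmeas (n, k)) (measurableSet_singleton _)
    have hc : {ω | ε (n, k) ω ≠ -((2 : ℝ) ^ n)⁻¹} = {ω | ε (n, k) ω = -((2 : ℝ) ^ n)⁻¹}ᶜ := rfl
    rw [hc, measure_compl hmeasset (measure_ne_top P _), (hdist n hn k hk).2, measure_univ,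
      ← ENNReal.ofReal_one, ← ENNReal.ofReal_sub _ (by linarith)]
    ring_nf
  -- bound P (E n) for all n
  have hEbound : ∀ n, P (E n) ≤ ENNReal.ofReal (g n) := by
    intro n
    rcases Nat.eq_zero_or_pos n with rfl | hn
    · calc P (E 0) ≤ 1 := prob_le_one
        _ ≤ ENNReal.ofReal (g 0) := by simp [hg]
    · calc P (E n) ≤ ∑ k ∈ Finset.Icc 1 (2 ^ (n - 1)),
            P {ω | ε (n, k) ω ≠ -((2 : ℝ) ^ n)⁻¹} := measure_biUnion_finset_le _ _
        _ = 2 ^ (n - 1) * ENNReal.ofReal ((4 : ℝ) ^ n)⁻¹ := by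
            rw [Finset.sum_congr rfl (hsingle n hn), Finset.sum_const, Nat.card_Icc]
            simp [mul_comm]
        _ = ENNReal.ofReal (g n) := by
            rw [hg, ENNReal.ofReal_mul (by positivity), ENNReal.ofReal_pow (by norm_num)]
            norm_num
  -- Borel–Cantelli
  have htsum : (∑' n, P (E n)) ≠ ⊤ := by
    refine ne_top_of_le_ne_top ?_ (ENNReal.tsum_le_tsum hEbound)
    rw [← ENNReal.ofReal_tsum_of_nonneg hg_nonneg hg_summable]
    exact ENNReal.ofReal_ne_top
  filter_upwards [ae_eventually_notMem htsum] with ω hω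
  have hgood : ∀ᶠ n in atTop, ∀ k ∈ Finset.Icc 1 (2 ^ (n - 1)),
      ε (n, k) ω = -((2 : ℝ) ^ n)⁻¹ := by
    filter_upwards [hω] with n hn k hk
    by_contra hne
    exact hn (Set.mem_biUnion hk hne)
  refine ⟨hgood, ?_⟩
  -- on good events the sum is exactly g n
  have heq : ∀ᶠ n in atTop,
      (∑ k ∈ Finset.Icc 1 (2 ^ (n - 1)), (ε (n, k) ω) ^ 2) = g n := by
    filter_upwards [hgood] with n hn
    have h2 : (4 : ℝ) ^ n = 2 ^ n * 2 ^ n := by rw [← mul_pow]; norm_num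
    calc (∑ k ∈ Finset.Icc 1 (2 ^ (n - 1)), (ε (n, k) ω) ^ 2)
        = ∑ k ∈ Finset.Icc 1 (2 ^ (n - 1)), ((4 : ℝ) ^ n)⁻¹ := by
          refine Finset.sum_congr rfl fun k hk => ?_
          rw [hn k hk, h2]
          field_simp
      _ = g n := by
          rw [Finset.sum_const, Nat.card_Icc, hg]
          push_cast
          ring
  exact hg_tendsto.congr' (heq.mono fun n h => h.symm)
end

section
/- Let {ε_{n,k}} be as above and fix t ∈ [0,1]. Let F_{n,t} = {k ∈ {1,…,2^{n−1}} : (2k−1)/2ⁿ ≤ t}, and set Xₙ(t) = ∑_{k ∈ F_{n,t}} ε_{n,k}. Then Xₙ(t) → −t/2 almost surely as n → ∞. -/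
open MeasureTheory Filter ProbabilityTheory

private lemma card_upper (n : ℕ) (t : ℝ) (ht0 : 0 ≤ t) :
    ((((Finset.Icc 1 (2 ^ (n - 1))).filter
        (fun (k : ℕ) => ((2 * (k : ℝ) - 1) / 2 ^ n) ≤ t)).card : ℝ)) ≤ (2 ^ n * t + 1) / 2 := by
  have h2n : (0:ℝ) < 2 ^ n := by positivity
  set m := ⌊((2:ℝ) ^ n * t + 1) / 2⌋₊ with hm
  have hsub : ((Finset.Icc 1 (2 ^ (n - 1))).filter
      (fun (k : ℕ) => ((2 * (k : ℝ) - 1) / 2 ^ n) ≤ t)) ⊆ Finset.Icc 1 m := by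
    intro k hk
    simp only [Finset.mem_filter, Finset.mem_Icc] at hk ⊢
    obtain ⟨⟨hk1, _⟩, hkt⟩ := hk
    refine ⟨hk1, Nat.le_floor ?_⟩
    have := (div_le_iff₀ h2n).mp hkt
    linarith
  have hcard := Finset.card_le_card hsub
  rw [Nat.card_Icc] at hcard
  have hmle : (m : ℝ) ≤ ((2:ℝ) ^ n * t + 1) / 2 := Nat.floor_le (by positivity)
  calc (_ : ℝ) ≤ (m + 1 - 1 : ℕ) := by exact_mod_cast hcard
    _ ≤ (m : ℝ) := by simp
    _ ≤ _ := hmle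

private lemma card_lower (n : ℕ) (hn : 1 ≤ n) (t : ℝ) (ht0 : 0 ≤ t) (ht1 : t ≤ 1) :
    (2 ^ n * t - 1) / 2 ≤ ((((Finset.Icc 1 (2 ^ (n - 1))).filter
        (fun (k : ℕ) => ((2 * (k : ℝ) - 1) / 2 ^ n) ≤ t)).card : ℝ)) := by
  have h2n : (0:ℝ) < 2 ^ n := by positivity
  set m := ⌊((2:ℝ) ^ n * t + 1) / 2⌋₊ with hm
  set M := min m (2 ^ (n - 1)) with hM
  have hsub : Finset.Icc 1 M ⊆ ((Finset.Icc 1 (2 ^ (n - 1))).filter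
      (fun (k : ℕ) => ((2 * (k : ℝ) - 1) / 2 ^ n) ≤ t)) := by
    intro k hk
    simp only [Finset.mem_filter, Finset.mem_Icc] at hk ⊢
    obtain ⟨hk1, hkM⟩ := hk
    refine ⟨⟨hk1, le_trans hkM (min_le_right _ _)⟩, ?_⟩
    have hkm : k ≤ m := le_trans hkM (min_le_left _ _)
    have : (k : ℝ) ≤ ((2:ℝ) ^ n * t + 1) / 2 :=
      le_trans (Nat.cast_le.mpr hkm) (Nat.floor_le (by positivity))
    rw [div_le_iff₀ h2n]
    linarith
  have hcard := Finset.card_le_card hsub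
  rw [Nat.card_Icc] at hcard
  have hMn : M ≤ ((Finset.Icc 1 (2 ^ (n - 1))).filter
      (fun (k : ℕ) => ((2 * (k : ℝ) - 1) / 2 ^ n) ≤ t)).card := by omega
  refine le_trans ?_ (Nat.cast_le.mpr hMn)
  have hmgt : ((2:ℝ) ^ n * t + 1) / 2 - 1 < (m : ℝ) := Nat.sub_one_lt_floor _
  have hpow : (2:ℝ) ^ (n - 1) * 2 = 2 ^ n := by
    rw [← pow_succ]
    congr 1
    omega
  have h2n1 : ((2 ^ (n - 1) : ℕ) : ℝ) = (2:ℝ) ^ (n - 1) := by push_cast; ring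
  have hcast : (M : ℝ) = min (m : ℝ) ((2:ℝ) ^ (n - 1)) := by
    rw [hM]
    push_cast
    rfl
  rw [hcast, le_min_iff]
  constructor
  · linarith
  · have : (2:ℝ) ^ n * t ≤ 2 ^ n * 1 := by
      exact mul_le_mul_of_nonneg_left ht1 (le_of_lt h2n)
    nlinarith

theorem stmt_13 {Ω : Type*} [MeasurableSpace Ω] (P : Measure Ω) [IsProbabilityMeasure P]
    (ε : ℕ × ℕ → Ω → ℝ) (hmeas : ∀ p, Measurable (ε p))
    (hindep : iIndepFun ε P)
    (hdist : ∀ n, 1 ≤ n → ∀ k ∈ Finset.Icc 1 (2 ^ (n - 1)),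
      P {ω | ε (n, k) ω = 2 ^ n * (1 - ((4 : ℝ) ^ n)⁻¹)} = ENNReal.ofReal ((4 : ℝ) ^ n)⁻¹ ∧
      P {ω | ε (n, k) ω = -((2 : ℝ) ^ n)⁻¹} = ENNReal.ofReal (1 - ((4 : ℝ) ^ n)⁻¹))
    (t : ℝ) (ht : t ∈ Set.Icc (0 : ℝ) 1) :
    ∀ᵐ ω ∂P,
      Tendsto
        (fun n => ∑ k ∈ (Finset.Icc 1 (2 ^ (n - 1))).filter
            (fun (k : ℕ) => ((2 * (k : ℝ) - 1) / 2 ^ n) ≤ t), ε (n, k) ω)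
        atTop (nhds (-t / 2)) := by
  obtain ⟨ht0, ht1⟩ := ht
  -- the bad events
  set A : ℕ → Set Ω := fun n =>
    ⋃ k ∈ Finset.Icc 1 (2 ^ n), {ω | ε (n + 1, k) ω ≠ -((2:ℝ) ^ (n + 1))⁻¹} with hA
  -- probability of each single bad event
  have hsingle : ∀ n, ∀ k ∈ Finset.Icc 1 (2 ^ n),
      P {ω | ε (n + 1, k) ω ≠ -((2:ℝ) ^ (n + 1))⁻¹}
        = ENNReal.ofReal (((4:ℝ) ^ (n + 1))⁻¹) := by
    intro n k hk
    have hk' : k ∈ Finset.Icc 1 (2 ^ (n + 1 - 1)) := by simpa using hk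
    have hd := (hdist (n + 1) (by omega) k hk').2
    have hms : MeasurableSet {ω | ε (n + 1, k) ω = -((2:ℝ) ^ (n + 1))⁻¹} :=
      (hmeas (n + 1, k)) (measurableSet_singleton _)
    have hcompl : {ω | ε (n + 1, k) ω ≠ -((2:ℝ) ^ (n + 1))⁻¹}
        = {ω | ε (n + 1, k) ω = -((2:ℝ) ^ (n + 1))⁻¹}ᶜ := rfl
    rw [hcompl, measure_compl hms (measure_ne_top _ _), hd, measure_univ]
    have h4 : (0:ℝ) ≤ ((4:ℝ) ^ (n + 1))⁻¹ := by positivity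
    have h4' : ((4:ℝ) ^ (n + 1))⁻¹ ≤ 1 :=
      inv_le_one_of_one_le₀ (one_le_pow₀ (by norm_num))
    rw [show (1 : ENNReal) = ENNReal.ofReal 1 by simp,
      ← ENNReal.ofReal_sub 1 (by linarith)]
    norm_num
  -- union bound
  have hAbound : ∀ n, P (A n) ≤ ENNReal.ofReal ((2:ℝ) ^ n * ((4:ℝ) ^ (n + 1))⁻¹) := by
    intro n
    calc P (A n) ≤ ∑ k ∈ Finset.Icc 1 (2 ^ n),
          P {ω | ε (n + 1, k) ω ≠ -((2:ℝ) ^ (n + 1))⁻¹} :=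
        measure_biUnion_finset_le _ _
      _ = ∑ k ∈ Finset.Icc 1 (2 ^ n), ENNReal.ofReal (((4:ℝ) ^ (n + 1))⁻¹) :=
        Finset.sum_congr rfl (fun k hk => hsingle n k hk)
      _ = (2 ^ n : ℕ) • ENNReal.ofReal (((4:ℝ) ^ (n + 1))⁻¹) := by
        rw [Finset.sum_const, Nat.card_Icc]
        norm_num
      _ = ENNReal.ofReal ((2:ℝ) ^ n * ((4:ℝ) ^ (n + 1))⁻¹) := by
        rw [nsmul_eq_mul, ENNReal.ofReal_mul (by positivity)]
        congr 1
        rw [ENNReal.ofReal_pow (by norm_num)]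
        norm_num
  -- summability
  have hsummable : Summable (fun n => (2:ℝ) ^ n * ((4:ℝ) ^ (n + 1))⁻¹) := by
    have heq : (fun n => (2:ℝ) ^ n * ((4:ℝ) ^ (n + 1))⁻¹)
        = fun n => (4:ℝ)⁻¹ * (2:ℝ)⁻¹ ^ n := by
      funext n
      rw [pow_succ, show (4:ℝ) = 2 * 2 by norm_num, mul_pow]
      field_simp
      ring_nf
      rw [← mul_pow]
      norm_num
    rw [heq]
    exact (summable_geometric_of_lt_one (by norm_num) (by norm_num)).mul_left _
  have htsum : ∑' n, P (A n) ≠ ⊤ := by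
    have h1 : ∑' n, P (A n) ≤ ∑' n, ENNReal.ofReal ((2:ℝ) ^ n * ((4:ℝ) ^ (n + 1))⁻¹) :=
      ENNReal.tsum_le_tsum hAbound
    have h2 : ∑' n, ENNReal.ofReal ((2:ℝ) ^ n * ((4:ℝ) ^ (n + 1))⁻¹)
        = ENNReal.ofReal (∑' n, (2:ℝ) ^ n * ((4:ℝ) ^ (n + 1))⁻¹) :=
      (ENNReal.ofReal_tsum_of_nonneg (fun n => by positivity) hsummable).symm
    rw [h2] at h1
    exact ne_top_of_le_ne_top ENNReal.ofReal_ne_top h1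
  -- Borel-Cantelli
  filter_upwards [MeasureTheory.ae_eventually_notMem htsum] with ω hω
  -- from eventual non-membership, the claims about ε values
  have hev : ∀ᶠ n in atTop, ∀ k ∈ Finset.Icc 1 (2 ^ (n - 1)),
      ε (n, k) ω = -((2:ℝ) ^ n)⁻¹ := by
    rw [eventually_atTop] at hω ⊢
    obtain ⟨N, hN⟩ := hω
    refine ⟨N + 1, fun n hn k hk => ?_⟩
    obtain ⟨m, rfl⟩ : ∃ m, n = m + 1 := ⟨n - 1, by omega⟩
    have := hN m (by omega)
    simp only [hA, Set.mem_iUnion, not_exists, Set.mem_setOf_eq] at this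
    have hk' : k ∈ Finset.Icc 1 (2 ^ m) := by simpa using hk
    have h := this k hk'
    simpa using not_not.mp (by simpa using h)
  -- squeeze
  have h2inv : Tendsto (fun n : ℕ => ((2:ℝ)⁻¹) ^ n) atTop (nhds 0) :=
    tendsto_pow_atTop_nhds_zero_of_lt_one (by norm_num) (by norm_num)
  refine tendsto_of_tendsto_of_tendsto_of_le_of_le'
    (g := fun n : ℕ => -t / 2 - ((2:ℝ)⁻¹) ^ n) (h := fun n : ℕ => -t / 2 + ((2:ℝ)⁻¹) ^ n)
    ?_ ?_ ?_ ?_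
  · simpa using (tendsto_const_nhds (x := -t/2)).sub h2inv
  · simpa using (tendsto_const_nhds (x := -t/2)).add h2inv
  · filter_upwards [hev, eventually_ge_atTop 1] with n hn hn1
    have hsum : ∑ k ∈ (Finset.Icc 1 (2 ^ (n - 1))).filter
          (fun (k : ℕ) => ((2 * (k : ℝ) - 1) / 2 ^ n) ≤ t), ε (n, k) ω
        = (((Finset.Icc 1 (2 ^ (n - 1))).filter
          (fun (k : ℕ) => ((2 * (k : ℝ) - 1) / 2 ^ n) ≤ t)).card : ℝ) * (-((2:ℝ) ^ n)⁻¹) := by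
      rw [Finset.sum_congr rfl (fun k hk => hn k (Finset.mem_of_mem_filter k hk)),
        Finset.sum_const, nsmul_eq_mul]
    rw [hsum, inv_pow]
    set c := (((Finset.Icc 1 (2 ^ (n - 1))).filter
      (fun (k : ℕ) => ((2 * (k : ℝ) - 1) / 2 ^ n) ≤ t)).card : ℝ)
    have hub := card_upper n t ht0
    have h2n : (0:ℝ) < 2 ^ n := by positivity
    have h1 : c * (2 ^ n)⁻¹ ≤ t / 2 + (2 ^ n)⁻¹ := by
      rw [← div_eq_mul_inv, div_le_iff₀ h2n]
      have : (t / 2 + ((2:ℝ) ^ n)⁻¹) * 2 ^ n = t / 2 * 2 ^ n + 1 := by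
        field_simp
      rw [this]
      nlinarith [hub]
    nlinarith [h1]
  · filter_upwards [hev, eventually_ge_atTop 1] with n hn hn1
    have hsum : ∑ k ∈ (Finset.Icc 1 (2 ^ (n - 1))).filter
          (fun (k : ℕ) => ((2 * (k : ℝ) - 1) / 2 ^ n) ≤ t), ε (n, k) ω
        = (((Finset.Icc 1 (2 ^ (n - 1))).filter
          (fun (k : ℕ) => ((2 * (k : ℝ) - 1) / 2 ^ n) ≤ t)).card : ℝ) * (-((2:ℝ) ^ n)⁻¹) := by
      rw [Finset.sum_congr rfl (fun k hk => hn k (Finset.mem_of_mem_filter k hk)),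
        Finset.sum_const, nsmul_eq_mul]
    rw [hsum, inv_pow]
    set c := (((Finset.Icc 1 (2 ^ (n - 1))).filter
      (fun (k : ℕ) => ((2 * (k : ℝ) - 1) / 2 ^ n) ≤ t)).card : ℝ)
    have hlb := card_lower n hn1 t ht0 ht1
    have h2n : (0:ℝ) < 2 ^ n := by positivity
    have h1 : t / 2 - (2 ^ n)⁻¹ ≤ c * (2 ^ n)⁻¹ := by
      rw [← div_eq_mul_inv, le_div_iff₀ h2n]
      have : (t / 2 - ((2:ℝ) ^ n)⁻¹) * 2 ^ n = t / 2 * 2 ^ n - 1 := by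
        field_simp
      rw [this]
      nlinarith [hlb]
    nlinarith [h1]
end

section
/- Fix η > 0 and T > 0. Let Z^{λ,η} solve dZ = −λZ dt + η dW with Z₀ = 0. Then Z^{λ,η} → 0 as λ → ∞ in the topology of uniform convergence on [0,T] in probability; i.e., for every ε > 0, P(sup_{t ≤ T} |Z^{λ,η}_t| ≥ ε) → 0 as λ → ∞. -/
open MeasureTheory Filter ProbabilityTheory
open scoped ENNReal NNReal Topology
open Set intervalIntegral

lemma int_exp_mul (lam a b : ℝ) (h : lam ≠ 0) :
    ∫ s in a..b, Real.exp (lam * s) = (Real.exp (lam * b) - Real.exp (lam * a)) / lam := by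
  have hd : ∀ x : ℝ, HasDerivAt (fun s => Real.exp (lam * s) / lam) (Real.exp (lam * x)) x := by
    intro x
    have h0 : HasDerivAt (fun s : ℝ => lam * s) lam x := by
      simpa using (hasDerivAt_id x).const_mul lam
    have h1 : HasDerivAt (fun s : ℝ => Real.exp (lam * s)) (Real.exp (lam * x) * lam) x :=
      (Real.hasDerivAt_exp (lam * x)).comp x h0
    have h2 := h1.div_const lam
    have : Real.exp (lam * x) * lam / lam = Real.exp (lam * x) := by
      field_simp
    rwa [this] at h2
  rw [intervalIntegral.integral_eq_sub_of_hasDerivAt (fun x _ => hd x)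
    ((Real.continuous_exp.comp (continuous_const.mul continuous_id)).intervalIntegrable a b)]
  ring

lemma cont_exp_mul (lam : ℝ) : Continuous (fun s : ℝ => Real.exp (lam * s)) :=
  Real.continuous_exp.comp (continuous_const.mul continuous_id)

/-- Explicit solution formula for the OU integral equation. -/
lemma ou_formula {lam η T : ℝ} (hT : 0 < T)
    {w z : ℝ → ℝ} (hw : Continuous w)
    (hz : ContinuousOn z (Set.Icc 0 T))
    (heq : ∀ t ∈ Set.Icc (0:ℝ) T, z t = -lam * (∫ s in (0:ℝ)..t, z s) + η * w t) :
    ∀ t ∈ Set.Icc (0:ℝ) T,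
      Real.exp (lam * t) * (∫ s in (0:ℝ)..t, z s)
        = η * ∫ s in (0:ℝ)..t, Real.exp (lam * s) * w s := by
  set Y : ℝ → ℝ := fun t => ∫ s in (0:ℝ)..t, z s with hY
  set G : ℝ → ℝ := fun t => ∫ s in (0:ℝ)..t, Real.exp (lam * s) * w s with hG
  set E : ℝ → ℝ := fun t => Real.exp (lam * t) with hE
  set F : ℝ → ℝ := fun t => E t * Y t - η * G t with hF
  have hIccuIcc : Icc (0:ℝ) T = uIcc (0:ℝ) T := (uIcc_of_le hT.le).symm
  have hzio : IntegrableOn z (uIcc (0:ℝ) T) := by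
    rw [← hIccuIcc]
    exact hz.integrableOn_compact isCompact_Icc
  have hcontY : ContinuousOn Y (Icc 0 T) := by
    rw [hIccuIcc]
    exact intervalIntegral.continuousOn_primitive_interval hzio
  have hwcont : Continuous (fun s => Real.exp (lam * s) * w s) := (cont_exp_mul lam).mul hw
  have hcontG : Continuous G :=
    intervalIntegral.continuous_primitive (fun a b => hwcont.intervalIntegrable a b) 0
  have hcontF : ContinuousOn F (Icc 0 T) :=
    (((cont_exp_mul lam).continuousOn).mul hcontY).sub
      (continuous_const.continuousOn.mul hcontG.continuousOn)
  have hderivF : ∀ x ∈ Ico (0:ℝ) T, HasDerivWithinAt F 0 (Ici x) x := by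
    intro x hx
    have hxIcc : x ∈ Icc (0:ℝ) T := ⟨hx.1, hx.2.le⟩
    have hmem : Icc (0:ℝ) T ∈ nhdsWithin x (Ici x) := by
      have : Ici x ∩ Iio T ⊆ Icc 0 T := fun y hy => ⟨hx.1.trans hy.1, hy.2.le⟩
      exact mem_nhdsWithin.2 ⟨Iio T, isOpen_Iio, hx.2, fun y hy => this ⟨hy.2, hy.1⟩⟩
    -- derivative of Y within Ici x
    have hzi : IntervalIntegrable z volume 0 x := by
      apply (hzio.mono_set _).intervalIntegrable
      rw [← hIccuIcc, uIcc_of_le hx.1]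
      exact Icc_subset_Icc le_rfl hx.2.le
    have hmem' : Icc (0:ℝ) T ∈ nhdsWithin x (Ioi x) :=
      nhdsWithin_mono x Ioi_subset_Ici_self hmem
    have hzc : ContinuousWithinAt z (Ioi x) x :=
      (((hz x hxIcc).mono_of_mem_nhdsWithin hmem).mono Ioi_subset_Ici_self)
    have hmeas : StronglyMeasurableAtFilter z (nhdsWithin x (Ioi x)) :=
      ⟨Icc 0 T, hmem', (hz.aestronglyMeasurable measurableSet_Icc)⟩
    have hY' : HasDerivWithinAt Y (z x) (Ici x) x :=
      intervalIntegral.integral_hasDerivWithinAt_right hzi hmeas hzc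
    -- derivative of G
    have hG' : HasDerivWithinAt G (Real.exp (lam * x) * w x) (Ici x) x :=
      (intervalIntegral.integral_hasStrictDerivAt_right
        (hwcont.intervalIntegrable 0 x) (hwcont.stronglyMeasurableAtFilter _ _)
        hwcont.continuousAt).hasDerivAt.hasDerivWithinAt
    -- derivative of E
    have hE' : HasDerivWithinAt E (lam * Real.exp (lam * x)) (Ici x) x := by
      have h0 : HasDerivAt (fun s : ℝ => lam * s) lam x := by
        simpa using (hasDerivAt_id x).const_mul lam
      have := (Real.hasDerivAt_exp (lam * x)).comp x h0
      rw [mul_comm] at this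
      exact this.hasDerivWithinAt
    have hcomb : HasDerivWithinAt F
        ((lam * Real.exp (lam * x)) * Y x + Real.exp (lam * x) * z x
          - η * (Real.exp (lam * x) * w x)) (Ici x) x :=
      (hE'.mul hY').sub (hG'.const_mul η)
    have hzero : (lam * Real.exp (lam * x)) * Y x + Real.exp (lam * x) * z x
          - η * (Real.exp (lam * x) * w x) = 0 := by
      have h := heq x hxIcc
      simp only [hY]
      rw [h]
      ring
    rwa [hzero] at hcomb
  have hconst := constant_of_has_deriv_right_zero hcontF hderivF
  intro t ht
  have hF0 : F 0 = 0 := by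
    simp [hF, hY, hG, hE]
  have := hconst t ht
  rw [hF0] at this
  have : E t * Y t = η * G t := by
    have h := this
    simp only [hF] at h
    linarith
  simpa [hE, hY, hG] using this

lemma pathwise_bound {lam η T δ a b : ℝ} (hlam : 0 < lam) (hη : 0 < η) (hT : 0 < T)
    (hδ : 0 < δ) (hb0 : 0 ≤ b)
    {w z : ℝ → ℝ} (hw : Continuous w) (hw0 : w 0 = 0)
    (hz : ContinuousOn z (Set.Icc 0 T))
    (heq : ∀ t ∈ Set.Icc (0:ℝ) T, z t = -lam * (∫ s in (0:ℝ)..t, z s) + η * w t)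
    (ha : ∀ u ∈ Set.Icc (0:ℝ) T, ∀ v ∈ Set.Icc (0:ℝ) T, |u - v| ≤ δ → |w u - w v| ≤ a)
    (hb : ∀ t ∈ Set.Icc (0:ℝ) T, |w t| ≤ b) :
    ∀ t ∈ Set.Icc (0:ℝ) T, |z t| ≤ η * (2*a + 3 * Real.exp (-lam*δ) * b) := by
  have ha0 : 0 ≤ a := by
    have := ha 0 (left_mem_Icc.2 hT.le) 0 (left_mem_Icc.2 hT.le) (by simp [hδ.le])
    simpa using this
  intro t ht
  obtain ⟨ht0, htT⟩ := ht
  have hform := ou_formula hT hw hz heq t ⟨ht0, htT⟩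
  have hexp_pos : (0:ℝ) < Real.exp (lam * t) := Real.exp_pos _
  -- z t = η * w t - lam * exp (-(lam*t)) * (η * ∫ exp(lam s) w s)
  have hzt : z t = η * (Real.exp (-(lam*t)) * w t
      + lam * Real.exp (-(lam*t)) * ∫ s in (0:ℝ)..t, Real.exp (lam * s) * (w t - w s)) := by
    have hY : (∫ s in (0:ℝ)..t, z s)
        = Real.exp (-(lam*t)) * (η * ∫ s in (0:ℝ)..t, Real.exp (lam * s) * w s) := by
      rw [← hform, ← mul_assoc, ← Real.exp_add]
      simp
    have hsplit : (∫ s in (0:ℝ)..t, Real.exp (lam * s) * (w t - w s))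
        = w t * ((Real.exp (lam*t) - 1)/lam) - ∫ s in (0:ℝ)..t, Real.exp (lam * s) * w s := by
      have h1 : IntervalIntegrable (fun s => Real.exp (lam * s) * w t) volume 0 t :=
        ((cont_exp_mul lam).mul continuous_const).intervalIntegrable 0 t
      have h2 : IntervalIntegrable (fun s => Real.exp (lam * s) * w s) volume 0 t :=
        ((cont_exp_mul lam).mul hw).intervalIntegrable 0 t
      have : (fun s => Real.exp (lam * s) * (w t - w s))
          = fun s => Real.exp (lam * s) * w t - Real.exp (lam * s) * w s := by
        funext s; ring
      rw [this, intervalIntegral.integral_sub h1 h2]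
      congr 1
      rw [intervalIntegral.integral_mul_const, int_exp_mul lam 0 t hlam.ne']
      simp [mul_comm]
    rw [heq t ⟨ht0, htT⟩, hY, hsplit, Real.exp_neg]
    field_simp
    ring
  set eδ := Real.exp (-(lam*δ)) with heδ
  set J := ∫ s in (0:ℝ)..t, Real.exp (lam * s) * (w t - w s) with hJdef
  have habs : ∀ u v : ℝ, IntervalIntegrable (fun s => Real.exp (lam * s) * |w t - w s|) volume u v :=
    fun u v => ((cont_exp_mul lam).mul (continuous_const.sub hw).abs).intervalIntegrable u v
  have hIJ : |J| ≤ (a * Real.exp (lam*t) + 2*b*Real.exp (lam*(t-δ)))/lam := by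
    have h1 : |J| ≤ ∫ s in (0:ℝ)..t, |Real.exp (lam * s) * (w t - w s)| :=
      intervalIntegral.abs_integral_le_integral_abs ht0
    have h1' : (∫ s in (0:ℝ)..t, |Real.exp (lam * s) * (w t - w s)|)
        = ∫ s in (0:ℝ)..t, Real.exp (lam * s) * |w t - w s| := by
      congr 1; funext s
      rw [abs_mul, abs_of_pos (Real.exp_pos _)]
    rw [h1'] at h1
    rcases le_or_gt t δ with hcase | hcase
    · -- t ≤ δ
      have hmono : (∫ s in (0:ℝ)..t, Real.exp (lam * s) * |w t - w s|)
          ≤ ∫ s in (0:ℝ)..t, Real.exp (lam * s) * a := by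
        apply intervalIntegral.integral_mono_on ht0 (habs 0 t)
          (((cont_exp_mul lam).mul continuous_const).intervalIntegrable 0 t)
        intro s hs
        have hws : |w t - w s| ≤ a := by
          apply ha t ⟨ht0, htT⟩ s ⟨hs.1, hs.2.trans htT⟩
          rw [abs_of_nonneg (by linarith [hs.2] : (0:ℝ) ≤ t - s)]
          linarith [hs.1]
        exact mul_le_mul_of_nonneg_left hws (Real.exp_pos _).le
      have hval : (∫ s in (0:ℝ)..t, Real.exp (lam * s) * a)
          = a * ((Real.exp (lam*t) - 1)/lam) := by
        rw [intervalIntegral.integral_mul_const, int_exp_mul lam 0 t hlam.ne']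
        simp [mul_comm]
      have hb1 : (0:ℝ) < Real.exp (lam*(t-δ)) := Real.exp_pos _
      have : a * ((Real.exp (lam*t) - 1)/lam) ≤ (a * Real.exp (lam*t) + 2*b*Real.exp (lam*(t-δ)))/lam := by
        rw [le_div_iff₀ hlam]
        field_simp
        nlinarith [Real.exp_pos (lam*t), mul_nonneg hb0 hb1.le]
      linarith [hmono, hval ▸ hmono]
    · -- δ < t
      have hsplit : (∫ s in (0:ℝ)..t, Real.exp (lam * s) * |w t - w s|)
          = (∫ s in (0:ℝ)..(t-δ), Real.exp (lam * s) * |w t - w s|)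
            + ∫ s in (t-δ)..t, Real.exp (lam * s) * |w t - w s| :=
        (intervalIntegral.integral_add_adjacent_intervals (habs 0 (t-δ)) (habs (t-δ) t)).symm
      have hA : (∫ s in (0:ℝ)..(t-δ), Real.exp (lam * s) * |w t - w s|)
          ≤ ∫ s in (0:ℝ)..(t-δ), Real.exp (lam * s) * (2*b) := by
        apply intervalIntegral.integral_mono_on (by linarith) (habs 0 (t-δ))
          (((cont_exp_mul lam).mul continuous_const).intervalIntegrable 0 (t-δ))
        intro s hs
        have h1 : |w t| ≤ b := hb t ⟨ht0, htT⟩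
        have h2 : |w s| ≤ b := hb s ⟨hs.1, by linarith [hs.2]⟩
        have : |w t - w s| ≤ 2*b := by
          calc |w t - w s| ≤ |w t| + |w s| := abs_sub _ _
          _ ≤ 2*b := by linarith
        exact mul_le_mul_of_nonneg_left this (Real.exp_pos _).le
      have hB : (∫ s in (t-δ)..t, Real.exp (lam * s) * |w t - w s|)
          ≤ ∫ s in (t-δ)..t, Real.exp (lam * s) * a := by
        apply intervalIntegral.integral_mono_on (by linarith) (habs (t-δ) t)
          (((cont_exp_mul lam).mul continuous_const).intervalIntegrable (t-δ) t)
        intro s hs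
        have hws : |w t - w s| ≤ a := by
          apply ha t ⟨ht0, htT⟩ s ⟨by linarith [hs.1], hs.2.trans htT⟩
          rw [abs_of_nonneg (by linarith [hs.2] : (0:ℝ) ≤ t - s)]
          linarith [hs.1]
        exact mul_le_mul_of_nonneg_left hws (Real.exp_pos _).le
      have hAval : (∫ s in (0:ℝ)..(t-δ), Real.exp (lam * s) * (2*b))
          = 2*b * ((Real.exp (lam*(t-δ)) - 1)/lam) := by
        rw [intervalIntegral.integral_mul_const, int_exp_mul lam 0 (t-δ) hlam.ne']
        simp [mul_comm]
      have hBval : (∫ s in (t-δ)..t, Real.exp (lam * s) * a)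
          = a * ((Real.exp (lam*t) - Real.exp (lam*(t-δ)))/lam) := by
        rw [intervalIntegral.integral_mul_const, int_exp_mul lam (t-δ) t hlam.ne']
        ring
      have hend : 2*b * ((Real.exp (lam*(t-δ)) - 1)/lam)
            + a * ((Real.exp (lam*t) - Real.exp (lam*(t-δ)))/lam)
          ≤ (a * Real.exp (lam*t) + 2*b*Real.exp (lam*(t-δ)))/lam := by
        rw [le_div_iff₀ hlam]
        field_simp
        nlinarith [Real.exp_pos (lam*(t-δ)), mul_nonneg ha0 (Real.exp_pos (lam*(t-δ))).le, hb0]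
      calc |J| ≤ _ := h1
        _ = _ := hsplit
        _ ≤ (∫ s in (0:ℝ)..(t-δ), Real.exp (lam * s) * (2*b))
            + ∫ s in (t-δ)..t, Real.exp (lam * s) * a := add_le_add hA hB
        _ = _ := by rw [hAval, hBval]
        _ ≤ _ := hend
  -- combine
  have hexpinv : Real.exp (-(lam*t)) * Real.exp (lam*t) = 1 := by
    rw [← Real.exp_add]; simp
  have hexpδ : Real.exp (-(lam*t)) * Real.exp (lam*(t-δ)) = eδ := by
    rw [heδ, ← Real.exp_add]; ring_nf
  have hterm2 : lam * Real.exp (-(lam*t)) * |J| ≤ a + 2*b*eδ := by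
    have h2 : lam * Real.exp (-(lam*t)) * |J|
        ≤ lam * Real.exp (-(lam*t)) * ((a * Real.exp (lam*t) + 2*b*Real.exp (lam*(t-δ)))/lam) := by
      apply mul_le_mul_of_nonneg_left hIJ
      positivity
    have h3 : lam * Real.exp (-(lam*t)) * ((a * Real.exp (lam*t) + 2*b*Real.exp (lam*(t-δ)))/lam)
        = a + 2*b*eδ := by
      field_simp
      linear_combination a * hexpinv + (2*b) * hexpδ
    linarith [h2, h3 ▸ h2]
  have hterm1 : Real.exp (-(lam*t)) * |w t| ≤ a + eδ * b := by
    rcases le_or_gt t δ with hcase | hcase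
    · have hwt : |w t| ≤ a := by
        have := ha t ⟨ht0, htT⟩ 0 (left_mem_Icc.2 hT.le) (by rw [sub_zero, abs_of_nonneg ht0]; exact hcase)
        simpa [hw0] using this
      have h1 : Real.exp (-(lam*t)) ≤ 1 := Real.exp_le_one_iff.2 (by nlinarith)
      nlinarith [abs_nonneg (w t), Real.exp_pos (-(lam*t)), Real.exp_pos (-(lam*δ)), mul_nonneg (Real.exp_pos (-(lam*δ))).le hb0]
    · have hwt : |w t| ≤ b := hb t ⟨ht0, htT⟩
      have h1 : Real.exp (-(lam*t)) ≤ eδ := Real.exp_le_exp.2 (by nlinarith)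
      nlinarith [abs_nonneg (w t), Real.exp_pos (-(lam*t)), ha0]
  have hfinal : |z t| ≤ η * ((a + eδ*b) + (a + 2*b*eδ)) := by
    rw [hzt, abs_mul, abs_of_pos hη]
    apply mul_le_mul_of_nonneg_left _ hη.le
    calc |Real.exp (-(lam*t)) * w t + lam * Real.exp (-(lam*t)) * J|
        ≤ |Real.exp (-(lam*t)) * w t| + |lam * Real.exp (-(lam*t)) * J| := abs_add_le _ _
      _ ≤ (a + eδ*b) + (a + 2*b*eδ) := by
          apply add_le_add
          · rw [abs_mul, abs_of_pos (Real.exp_pos _)]; exact hterm1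
          · rw [abs_mul, abs_of_pos (by positivity : (0:ℝ) < lam * Real.exp (-(lam*t)))]
            exact hterm2
  calc |z t| ≤ _ := hfinal
    _ = η * (2*a + 3 * Real.exp (-lam*δ) * b) := by rw [heδ]; ring_nf

lemma real_le_of_forall_pos {x y : ℝ} (h : ∀ e : ℝ, 0 < e → x ≤ y + e) : x ≤ y := by
  by_contra hc
  push_neg at hc
  have := h ((x - y)/2) (by linarith)
  linarith

/-- a rational point close to `u` inside `[0, T]`. -/
lemma exists_rat_near_Icc {T u θ : ℝ} (hT : 0 < T) (hu : u ∈ Set.Icc 0 T) (hθ : 0 < θ) :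
    ∃ p : ℚ, (p:ℝ) ∈ Set.Icc 0 T ∧ |(p:ℝ) - u| < θ := by
  obtain ⟨hu0, huT⟩ := hu
  have hlohi : max (u - θ) 0 < min (u + θ) T := by
    simp only [max_lt_iff, lt_min_iff]
    constructor <;> constructor <;> linarith
  obtain ⟨p, hp1, hp2⟩ := exists_rat_btwn hlohi
  refine ⟨p, ⟨?_, ?_⟩, ?_⟩
  · exact le_of_lt (lt_of_le_of_lt (le_max_right _ _) hp1)
  · exact le_of_lt (lt_of_lt_of_le hp2 (min_le_right _ _))
  · rw [abs_lt]
    constructor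
    · have := lt_of_le_of_lt (le_max_left (u-θ) 0) hp1
      linarith
    · have := lt_of_lt_of_le hp2 (min_le_left (u+θ) T)
      linarith

noncomputable def oscQ {Ω : Type*} (W : ℝ → Ω → ℝ) (T : ℝ) (n : ℕ) (ω : Ω) : ℝ≥0∞ :=
  ⨆ p : ℚ, ⨆ q : ℚ,
    if (p:ℝ) ∈ Set.Icc 0 T ∧ (q:ℝ) ∈ Set.Icc 0 T ∧ |(p:ℝ) - (q:ℝ)| ≤ 2/(n+1)
    then ENNReal.ofReal |W p ω - W q ω| else 0

noncomputable def MQ {Ω : Type*} (W : ℝ → Ω → ℝ) (T : ℝ) (ω : Ω) : ℝ≥0∞ :=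
  ⨆ q : ℚ, if (q:ℝ) ∈ Set.Icc 0 T then ENNReal.ofReal |W q ω| else 0

lemma oscQ_measurable {Ω : Type*} [MeasurableSpace Ω] (W : ℝ → Ω → ℝ)
    (hW : ∀ t, Measurable (W t)) (T : ℝ) (n : ℕ) : Measurable (oscQ W T n) := by
  apply Measurable.iSup
  intro p
  apply Measurable.iSup
  intro q
  split_ifs with h
  · exact (ENNReal.measurable_ofReal.comp (((hW p).sub (hW q)).abs))
  · exact measurable_const

lemma MQ_measurable {Ω : Type*} [MeasurableSpace Ω] (W : ℝ → Ω → ℝ)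
    (hW : ∀ t, Measurable (W t)) (T : ℝ) : Measurable (MQ W T) := by
  apply Measurable.iSup
  intro q
  split_ifs with h
  · exact (ENNReal.measurable_ofReal.comp ((hW q).abs))
  · exact measurable_const

lemma oscQ_antitone {Ω : Type*} (W : ℝ → Ω → ℝ) (T : ℝ) (ω : Ω) :
    Antitone (fun n => oscQ W T n ω) := by
  intro n m hnm
  apply iSup_mono; intro p
  apply iSup_mono; intro q
  split_ifs with h1 h2
  · exact le_rfl
  · exfalso; apply h2
    refine ⟨h1.1, h1.2.1, h1.2.2.trans ?_⟩
    apply div_le_div_of_nonneg_left (by norm_num) (by positivity)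
    exact_mod_cast Nat.succ_le_succ hnm
  · exact zero_le
  · exact le_rfl

/-- transfer oscillation bound from rationals to reals -/
lemma oscQ_transfer {Ω : Type*} {W : ℝ → Ω → ℝ} {T a : ℝ} {n : ℕ} {ω : Ω}
    (hT : 0 < T) (ha : 0 ≤ a) (hcont : Continuous fun t => W t ω)
    (h : oscQ W T n ω ≤ ENNReal.ofReal a) :
    ∀ u ∈ Set.Icc (0:ℝ) T, ∀ v ∈ Set.Icc (0:ℝ) T,
      |u - v| ≤ 1/(n+1) → |W u ω - W v ω| ≤ a := by
  intro u hu v hv huv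
  apply real_le_of_forall_pos
  intro e he
  obtain ⟨θu, hθu, hu'⟩ := Metric.continuous_iff.1 hcont u (e/2) (by linarith)
  obtain ⟨θv, hθv, hv'⟩ := Metric.continuous_iff.1 hcont v (e/2) (by linarith)
  have hhalf : (0:ℝ) < 1/(2*(n+1)) := by positivity
  obtain ⟨p, hp, hpu⟩ := exists_rat_near_Icc hT hu (lt_min hθu hhalf)
  obtain ⟨q, hq, hqv⟩ := exists_rat_near_Icc hT hv (lt_min hθv hhalf)
  have hpq : |(p:ℝ) - (q:ℝ)| ≤ 2/(n+1) := by
    have h1 : |(p:ℝ) - u| < 1/(2*(n+1)) := lt_of_lt_of_le hpu (min_le_right _ _)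
    have h2 : |(q:ℝ) - v| < 1/(2*(n+1)) := lt_of_lt_of_le hqv (min_le_right _ _)
    have := abs_sub_abs_le_abs_sub ((p:ℝ) - u) ((q:ℝ) - v)
    have e1 : |(p:ℝ) - (q:ℝ)| ≤ |(p:ℝ) - u| + |u - v| + |v - (q:ℝ)| := by
      have h3 : (p:ℝ) - q = ((p:ℝ) - u) + (u - v) + (v - q) := by ring
      rw [h3]
      calc |((p:ℝ) - u) + (u - v) + (v - q)|
          ≤ |((p:ℝ) - u) + (u - v)| + |v - (q:ℝ)| := abs_add_le _ _
        _ ≤ |(p:ℝ) - u| + |u - v| + |v - (q:ℝ)| := by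
            have := abs_add_le ((p:ℝ) - u) (u - v); linarith
    have h2' : |v - (q:ℝ)| = |(q:ℝ) - v| := abs_sub_comm _ _
    have hn : (0:ℝ) < (n:ℝ) + 1 := by positivity
    have : 1/(2*((n:ℝ)+1)) + 1/((n:ℝ)+1) + 1/(2*((n:ℝ)+1)) = 2/((n:ℝ)+1) := by
      field_simp; ring
    linarith
  have hWpq : |W p ω - W q ω| ≤ a := by
    have hterm : ENNReal.ofReal |W p ω - W q ω| ≤ oscQ W T n ω := by
      have h1 : (if (p:ℝ) ∈ Set.Icc 0 T ∧ (q:ℝ) ∈ Set.Icc 0 T ∧ |(p:ℝ) - (q:ℝ)| ≤ 2/(n+1)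
          then ENNReal.ofReal |W p ω - W q ω| else 0) ≤ oscQ W T n ω := by
        unfold oscQ
        exact le_iSup₂ (f := fun (p' q' : ℚ) =>
          if ((p':ℝ) ∈ Set.Icc 0 T ∧ ((q':ℝ)) ∈ Set.Icc 0 T ∧ |(p':ℝ) - (q':ℝ)| ≤ 2/(n+1))
          then ENNReal.ofReal |W p' ω - W q' ω| else 0) p q
      rwa [if_pos ⟨hp, hq, hpq⟩] at h1
    have := hterm.trans h
    exact (ENNReal.ofReal_le_ofReal_iff ha).1 this
  have hup : |W u ω - W p ω| < e/2 := by
    have := hu' p (by simpa [Real.dist_eq, abs_sub_comm] using hpu.trans_le (min_le_left _ _))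
    simpa [Real.dist_eq, abs_sub_comm] using this
  have hqv' : |W q ω - W v ω| < e/2 := by
    have := hv' q (by simpa [Real.dist_eq, abs_sub_comm] using hqv.trans_le (min_le_left _ _))
    simpa [Real.dist_eq] using this
  calc |W u ω - W v ω|
      = |(W u ω - W p ω) + (W p ω - W q ω) + (W q ω - W v ω)| := by ring_nf
    _ ≤ |(W u ω - W p ω) + (W p ω - W q ω)| + |W q ω - W v ω| := abs_add_le _ _
    _ ≤ |W u ω - W p ω| + |W p ω - W q ω| + |W q ω - W v ω| := by
        have := abs_add_le (W u ω - W p ω) (W p ω - W q ω); linarith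
    _ ≤ a + e := by linarith

lemma MQ_transfer {Ω : Type*} {W : ℝ → Ω → ℝ} {T b : ℝ} {ω : Ω}
    (hT : 0 < T) (hb : 0 ≤ b) (hcont : Continuous fun t => W t ω)
    (h : MQ W T ω ≤ ENNReal.ofReal b) :
    ∀ t ∈ Set.Icc (0:ℝ) T, |W t ω| ≤ b := by
  intro t ht
  apply real_le_of_forall_pos
  intro e he
  obtain ⟨θ, hθ, ht'⟩ := Metric.continuous_iff.1 hcont t e he
  obtain ⟨p, hp, hpt⟩ := exists_rat_near_Icc hT ht hθ
  have hWp : |W p ω| ≤ b := by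
    have hterm : ENNReal.ofReal |W p ω| ≤ MQ W T ω := by
      have h1 : (if (p:ℝ) ∈ Set.Icc 0 T then ENNReal.ofReal |W p ω| else 0) ≤ MQ W T ω := by
        unfold MQ
        exact le_iSup (fun q' : ℚ => if ((q':ℝ)) ∈ Set.Icc 0 T then ENNReal.ofReal |W q' ω| else 0) p
      rwa [if_pos hp] at h1
    exact (ENNReal.ofReal_le_ofReal_iff hb).1 (hterm.trans h)
  have := ht' p (by simpa [Real.dist_eq, abs_sub_comm] using hpt)
  rw [Real.dist_eq] at this
  calc |W t ω| = |(W t ω - W p ω) + W p ω| := by ring_nf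
    _ ≤ |W t ω - W p ω| + |W p ω| := abs_add_le _ _
    _ ≤ b + e := by rw [abs_sub_comm] at this; linarith

lemma oscQ_small {Ω : Type*} {W : ℝ → Ω → ℝ} {T r : ℝ} {ω : Ω}
    (hT : 0 < T) (hr : 0 < r) (hcont : Continuous fun t => W t ω) :
    ∃ n : ℕ, oscQ W T n ω < ENNReal.ofReal r := by
  have huc := (isCompact_Icc : IsCompact (Set.Icc (0:ℝ) T)).uniformContinuousOn_of_continuous
    hcont.continuousOn
  obtain ⟨δ, hδ, hδ'⟩ := Metric.uniformContinuousOn_iff.1 huc (r/2) (by linarith)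
  obtain ⟨n, hn⟩ := exists_nat_gt (2/δ)
  refine ⟨n, lt_of_le_of_lt (?_ : oscQ W T n ω ≤ ENNReal.ofReal (r/2)) ?_⟩
  · apply iSup_le; intro p
    apply iSup_le; intro q
    split_ifs with h
    · apply ENNReal.ofReal_le_ofReal
      apply le_of_lt
      have hd : dist (p:ℝ) (q:ℝ) < δ := by
        rw [Real.dist_eq]
        calc |(p:ℝ) - (q:ℝ)| ≤ 2/(n+1) := h.2.2
          _ < δ := by
            rw [div_lt_iff₀ (by positivity)]
            rw [div_lt_iff₀ hδ] at hn
            nlinarith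
      have := hδ' p h.1 q h.2.1 hd
      rw [Real.dist_eq] at this
      linarith
    · exact zero_le
  · exact ENNReal.ofReal_lt_ofReal_iff hr |>.2 (by linarith)

lemma MQ_lt_top {Ω : Type*} {W : ℝ → Ω → ℝ} {T : ℝ} {ω : Ω}
    (hcont : Continuous fun t => W t ω) :
    ∃ C : ℝ, 0 ≤ C ∧ MQ W T ω ≤ ENNReal.ofReal C := by
  obtain ⟨C, hC⟩ := (isCompact_Icc : IsCompact (Set.Icc (0:ℝ) T)).exists_bound_of_continuousOn
    hcont.continuousOn
  refine ⟨max C 0, le_max_right _ _, ?_⟩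
  apply iSup_le; intro q
  split_ifs with h
  · apply ENNReal.ofReal_le_ofReal
    exact le_trans (by simpa using hC q h) (le_max_left _ _)
  · exact zero_le

/-- `Z` is a (pathwise) solution of the Ornstein–Uhlenbeck equation
`dZ = -λ Z dt + η dW`, `Z₀ = 0`, on `[0, T]`, in integral form. -/
def SolvesOU {Ω : Type*} [MeasurableSpace Ω] (P : Measure Ω) (lam η : ℝ)
    (W Z : ℝ → Ω → ℝ) (T : ℝ) : Prop :=
  ∀ᵐ ω ∂P, ContinuousOn (fun t => Z t ω) (Set.Icc 0 T) ∧ Z 0 ω = 0 ∧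
    ∀ t ∈ Set.Icc (0 : ℝ) T,
      Z t ω = -lam * (∫ s in (0 : ℝ)..t, Z s ω) + η * W t ω

/-- `W` is a standard Brownian motion under `P`. -/
def IsBrownianMotion {Ω : Type*} [MeasurableSpace Ω] (P : Measure Ω)
    (W : ℝ → Ω → ℝ) : Prop :=
  (∀ t, Measurable (W t)) ∧
  (∀ᵐ ω ∂P, W 0 ω = 0 ∧ Continuous fun t => W t ω) ∧
  (∀ s t : ℝ, 0 ≤ s → s ≤ t →
    Measure.map (fun ω => W t ω - W s ω) P = gaussianReal 0 (Real.toNNReal (t - s))) ∧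
  (∀ (n : ℕ) (u : ℕ → ℝ), Monotone u → 0 ≤ u 0 →
    iIndepFun
      (fun i : Fin n => fun ω => W (u (i + 1)) ω - W (u i) ω) P)

theorem stmt_15 {Ω : Type*} [MeasurableSpace Ω] (P : Measure Ω) [IsProbabilityMeasure P]
    (W : ℝ → Ω → ℝ) (hW : IsBrownianMotion P W)
    (T η : ℝ) (hT : 0 < T) (hη : 0 < η)
    (Z : ℝ → ℝ → Ω → ℝ) (hZ : ∀ lam : ℝ, 0 < lam → SolvesOU P lam η W (Z lam) T) :
    ∀ ε : ℝ, 0 < ε →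
      Tendsto (fun lam => P {ω | ε ≤ ⨆ t : Set.Icc (0 : ℝ) T, |Z lam t ω|})
        atTop (nhds 0) := by
  intro ε hε
  obtain ⟨hWmeas, hWae, -, -⟩ := hW
  have hNnull : P {ω | ¬(W 0 ω = 0 ∧ Continuous fun t => W t ω)} = 0 := ae_iff.1 hWae
  rw [ENNReal.tendsto_nhds_zero]
  intro ε' hε'
  set a := ε/(8*η) with hadef
  have ha : 0 < a := by positivity
  set S : ℕ → Set Ω := fun n => {ω | ENNReal.ofReal a ≤ oscQ W T n ω} with hSdef
  have hSmeas : ∀ n, MeasurableSet (S n) :=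
    fun n => measurableSet_le measurable_const (oscQ_measurable W hWmeas T n)
  have hSanti : Antitone S := by
    intro n m hnm ω hω
    exact le_trans hω (oscQ_antitone W T ω hnm)
  have hSint : P (⋂ n, S n) = 0 := by
    apply measure_mono_null _ hNnull
    intro ω hω
    simp only [Set.mem_iInter] at hω
    simp only [Set.mem_setOf_eq]
    intro hgood
    obtain ⟨n, hn⟩ := oscQ_small (W := W) hT ha hgood.2
    exact absurd (hω n) (not_le.2 hn)
  have hStend : Tendsto (fun n => P (S n)) atTop (𝓝 0) := by
    have h := tendsto_measure_iInter_atTop (fun n => (hSmeas n).nullMeasurableSet)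
      hSanti ⟨0, measure_ne_top P _⟩
    rw [hSint] at h
    exact h
  obtain ⟨n₀, hn₀⟩ : ∃ n, P (S n) < ε'/2 :=
    (hStend.eventually_lt_const (ENNReal.half_pos hε'.ne')).exists
  set Ms : ℕ → Set Ω := fun r => {ω | ENNReal.ofReal r ≤ MQ W T ω} with hMsdef
  have hMsmeas : ∀ r, MeasurableSet (Ms r) :=
    fun r => measurableSet_le measurable_const (MQ_measurable W hWmeas T)
  have hMsanti : Antitone Ms := by
    intro r s hrs ω hω
    refine le_trans (ENNReal.ofReal_le_ofReal ?_) hω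
    exact_mod_cast hrs
  have hMsint : P (⋂ r, Ms r) = 0 := by
    apply measure_mono_null _ hNnull
    intro ω hω
    simp only [Set.mem_iInter] at hω
    simp only [Set.mem_setOf_eq]
    intro hgood
    obtain ⟨C, hC0, hC⟩ := MQ_lt_top (W := W) (T := T) hgood.2
    obtain ⟨r, hr⟩ := exists_nat_gt C
    have h1 : ENNReal.ofReal (r:ℝ) ≤ ENNReal.ofReal C := le_trans (hω r) hC
    have h2 : ENNReal.ofReal C < ENNReal.ofReal (r:ℝ) :=
      (ENNReal.ofReal_lt_ofReal_iff (lt_of_le_of_lt hC0 hr)).2 hr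
    exact absurd h1 (not_le.2 h2)
  have hMtend : Tendsto (fun r => P (Ms r)) atTop (𝓝 0) := by
    have h := tendsto_measure_iInter_atTop (fun r => (hMsmeas r).nullMeasurableSet)
      hMsanti ⟨0, measure_ne_top P _⟩
    rw [hMsint] at h
    exact h
  obtain ⟨r₀, hr₀⟩ : ∃ r : ℕ, P (Ms r) < ε'/2 :=
    (hMtend.eventually_lt_const (ENNReal.half_pos hε'.ne')).exists
  set δ := 1/((n₀:ℝ)+1) with hδdef
  have hδ : 0 < δ := by positivity
  have htend : Tendsto (fun lam : ℝ => ε * Real.exp (lam * δ) / (12*η)) atTop atTop := by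
    have h1 : Tendsto (fun lam : ℝ => lam * δ) atTop atTop :=
      Tendsto.atTop_mul_const hδ tendsto_id
    have h2 : Tendsto (fun lam : ℝ => Real.exp (lam * δ)) atTop atTop :=
      Real.tendsto_exp_atTop.comp h1
    exact (h2.const_mul_atTop hε).atTop_div_const (by positivity)
  filter_upwards [eventually_ge_atTop (1:ℝ), htend.eventually_ge_atTop (r₀ : ℝ)]
    with lam hlam1 hlam2
  have hlam : 0 < lam := lt_of_lt_of_le one_pos hlam1
  set b := ε * Real.exp (lam * δ) / (12*η) with hbdef
  have hb0 : 0 ≤ b := by positivity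
  have hgoodae := (hZ lam hlam).and hWae
  have hNnull' : P {ω | ¬ ((ContinuousOn (fun t => Z lam t ω) (Set.Icc 0 T) ∧ Z lam 0 ω = 0 ∧
      ∀ t ∈ Set.Icc (0 : ℝ) T,
        Z lam t ω = -lam * (∫ s in (0 : ℝ)..t, Z lam s ω) + η * W t ω) ∧
      (W 0 ω = 0 ∧ Continuous fun t => W t ω))} = 0 := ae_iff.1 hgoodae
  set N := {ω | ¬ ((ContinuousOn (fun t => Z lam t ω) (Set.Icc 0 T) ∧ Z lam 0 ω = 0 ∧
      ∀ t ∈ Set.Icc (0 : ℝ) T,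
        Z lam t ω = -lam * (∫ s in (0 : ℝ)..t, Z lam s ω) + η * W t ω) ∧
      (W 0 ω = 0 ∧ Continuous fun t => W t ω))} with hNdef
  have hsub : {ω | ε ≤ ⨆ t : Set.Icc (0:ℝ) T, |Z lam t ω|} ⊆ N ∪ (S n₀ ∪ Ms r₀) := by
    intro ω hω
    by_contra hc
    simp only [Set.mem_union, not_or] at hc
    obtain ⟨hcN, hcS, hcM⟩ := hc
    have hgoodω : (ContinuousOn (fun t => Z lam t ω) (Set.Icc 0 T) ∧ Z lam 0 ω = 0 ∧
        ∀ t ∈ Set.Icc (0 : ℝ) T,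
          Z lam t ω = -lam * (∫ s in (0 : ℝ)..t, Z lam s ω) + η * W t ω) ∧
        (W 0 ω = 0 ∧ Continuous fun t => W t ω) := by
      have h := hcN
      rw [hNdef] at h
      exact not_not.1 h
    obtain ⟨⟨hzc, hz0, heqω⟩, hw0, hwc⟩ := hgoodω
    have hosc : oscQ W T n₀ ω ≤ ENNReal.ofReal a := by
      have := hcS
      rw [hSdef] at this
      simpa [Set.mem_setOf_eq, not_le] using le_of_lt (not_le.1 this)
    have hA := oscQ_transfer hT ha.le hwc hosc
    have hbr : (r₀ : ℝ) ≤ b := hlam2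
    have hMQ : MQ W T ω ≤ ENNReal.ofReal b := by
      have h1 : MQ W T ω < ENNReal.ofReal (r₀:ℝ) := not_le.1 hcM
      exact le_trans h1.le (ENNReal.ofReal_le_ofReal hbr)
    have hB := MQ_transfer hT hb0 hwc hMQ
    have hbd := pathwise_bound hlam hη hT hδ hb0 hwc hw0 hzc heqω hA hB
    have hval : η * (2*a + 3 * Real.exp (-lam*δ) * b) = ε/2 := by
      have e1 : Real.exp (-(lam*δ)) * Real.exp (lam*δ) = 1 := by
        rw [← Real.exp_add]
        simp
      rw [neg_mul, hadef, hbdef]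
      field_simp
      linear_combination 48 * e1
    haveI : Nonempty (Set.Icc (0:ℝ) T) := ⟨⟨0, left_mem_Icc.2 hT.le⟩⟩
    have hsup : (⨆ t : Set.Icc (0:ℝ) T, |Z lam t ω|) ≤ ε/2 :=
      ciSup_le (fun t => le_of_le_of_eq (hbd t t.2) hval)
    have hωε : ε ≤ ⨆ t : Set.Icc (0:ℝ) T, |Z lam t ω| := hω
    linarith [le_trans hωε hsup]
  calc P {ω | ε ≤ ⨆ t : Set.Icc (0:ℝ) T, |Z lam t ω|}
      ≤ P (N ∪ (S n₀ ∪ Ms r₀)) := measure_mono hsub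
    _ ≤ P N + (P (S n₀) + P (Ms r₀)) :=
        le_trans (measure_union_le _ _) (add_le_add le_rfl (measure_union_le _ _))
    _ ≤ 0 + (ε'/2 + ε'/2) := by
        rw [hNdef] at *
        exact add_le_add (le_of_eq hNnull') (add_le_add hn₀.le hr₀.le)
    _ = ε' := by rw [zero_add, ENNReal.add_halves]
end
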